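/- Any line in PG(n,q), with q a square, intersects a Hermitian variety in exactly 1 point, exactly q^{1/2} + 1 points, or is entirely contained in the variety. -/

import Mathlib

open scoped Classical
open Polynomial

lemma aux_roots {F : Type} [Field F] (f : Polynomial F) (hf : f ≠ 0) :
    {x : F | f.eval x = 0}.ncard ≤ f.natDegree := by
  classical
  have h : {x : F | f.eval x = 0} = (f.roots.toFinset : Set F) := by
    ext x
    simp [Polynomial.mem_roots, hf, Polynomial.IsRoot]
  rw [h, Set.ncard_coe_finset]
  exact le_trans (Multiset.toFinset_card_le _) (Polynomial.card_roots' f)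

lemma aux_pow_le {F : Type} [Field F] {m : ℕ} (hm : 0 < m) (c : F) :
    {x : F | x ^ m = c}.ncard ≤ m := by
  have h : {x : F | x ^ m = c} = {x : F | (X ^ m - C c : Polynomial F).eval x = 0} := by
    ext x; simp [sub_eq_zero]
  rw [h]
  have := aux_roots (X ^ m - C c) (X_pow_sub_C_ne_zero hm c)
  rwa [natDegree_X_pow_sub_C] at this

lemma aux_add_pow_le {F : Type} [Field F] {p : ℕ} (hp : 2 ≤ p) (d : F) :
    {x : F | x + x ^ p = d}.ncard ≤ p := by
  set f : Polynomial F := X ^ p + X - C d with hf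
  have hne : f ≠ 0 := by
    intro h0
    have : f.coeff p = 1 := by
      have h1 : p ≠ 1 := by omega
      have h2 : p ≠ 0 := by omega
      simp [hf, coeff_X, coeff_C, h1, h2, Ne.symm h1]
    rw [h0] at this
    simp at this
  have hdeg : f.natDegree ≤ p := by
    apply le_trans (natDegree_sub_le _ _)
    simp only [natDegree_C, max_eq_left (Nat.zero_le _)]
    apply le_trans (natDegree_add_le _ _)
    simp
    omega
  have h : {x : F | x + x ^ p = d} = {x : F | f.eval x = 0} := by
    ext x; simp [hf, sub_eq_zero]; constructor <;> intro h <;> linear_combination h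
  rw [h]
  exact le_trans (aux_roots f hne) hdeg

lemma aux_frob {F : Type} [Field F] [Fintype F] {p : ℕ}
    (hp : ∃ r k : ℕ, Nat.Prime r ∧ 0 < k ∧ p = r ^ k) (hq : Fintype.card F = p ^ 2) :
    ∀ a b : F, (a + b) ^ p = a ^ p + b ^ p := by
  obtain ⟨r, k, hr, hk, rfl⟩ := hp
  have hchar : CharP F (ringChar F) := ringChar.charP F
  have hprime : (ringChar F).Prime := CharP.char_is_prime F (ringChar F)
  have hdvd : ringChar F ∣ r ^ k := by
    have h1 : ((Fintype.card F : ℕ) : F) = 0 := FiniteField.cast_card_eq_zero F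
    have h2 : ringChar F ∣ Fintype.card F := (CharP.cast_eq_zero_iff F (ringChar F) _).1 h1
    have h3 : ringChar F ∣ (r ^ k) ^ 2 := by
      rw [← hq]
      exact h2
    exact hprime.dvd_of_dvd_pow h3
  have : ringChar F = r := by
    have := hprime.dvd_of_dvd_pow hdvd
    exact ((Nat.prime_dvd_prime_iff_eq hprime hr).1 this)
  haveI : CharP F r := this ▸ hchar
  haveI : Fact (Nat.Prime r) := ⟨hr⟩
  intro a b
  exact add_pow_char_pow ..

lemma aux_ppow {F : Type} [Field F] [Fintype F] {p : ℕ}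
    (hq : Fintype.card F = p ^ 2) (a : F) : (a ^ p) ^ p = a := by
  have := FiniteField.pow_card a
  rw [hq] at this
  rw [← pow_mul, ← pow_two]
  exact this

lemma aux_fix_le {F : Type} [Field F] {p : ℕ} (hp : 2 ≤ p) :
    {x : F | x ^ p = x}.ncard ≤ p := by
  classical
  set f : Polynomial F := X ^ p - X with hf
  have h1 : p ≠ 1 := by omega
  have h2 : p ≠ 0 := by omega
  have hne : f ≠ 0 := by
    intro h0
    have : f.coeff p = 1 := by simp [hf, coeff_X, h1, h2, Ne.symm h1]
    rw [h0] at this; simp at this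
  have hdeg : f.natDegree ≤ p := by
    apply le_trans (natDegree_sub_le _ _); simp; omega
  have h : {x : F | x ^ p = x} = {x : F | f.eval x = 0} := by
    ext x; simp [hf, sub_eq_zero]
  rw [h]
  exact le_trans (aux_roots f hne) hdeg

def auxL {F : Type} [Field F] (p : ℕ) (hfrob : ∀ a b : F, (a + b) ^ p = a ^ p + b ^ p)
    (hp0 : p ≠ 0) : F →+ F where
  toFun u := u + u ^ p
  map_zero' := by simp [zero_pow hp0]
  map_add' a b := by show (a + b) + (a + b) ^ p = (a + a ^ p) + (b + b ^ p); rw [hfrob]; ring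

@[simp] lemma auxL_apply {F : Type} [Field F] (p : ℕ)
    (hfrob : ∀ a b : F, (a + b) ^ p = a ^ p + b ^ p) (hp0 : p ≠ 0) (u : F) :
    auxL p hfrob hp0 u = u + u ^ p := rfl

lemma aux_nat {a b p : ℕ} (h : a * b = p * p) (ha : a ≤ p) (hb : b ≤ p) (hp : 0 < p) :
    a = p ∧ b = p := by
  constructor <;> nlinarith

lemma aux_add_count {F : Type} [Field F] [Fintype F] {p : ℕ}
    (hq : Fintype.card F = p ^ 2) (hp2 : 2 ≤ p)
    (hfrob : ∀ a b : F, (a + b) ^ p = a ^ p + b ^ p) {d : F} (hd : d ^ p = d) :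
    {u : F | u + u ^ p = d}.ncard = p := by
  classical
  have hsub : ∀ a b : F, (a - b) ^ p = a ^ p - b ^ p := by
    intro a b
    have h := hfrob (a - b) b
    rw [sub_add_cancel] at h
    linear_combination -h
  have hp0 : p ≠ 0 := by omega
  set L : F →+ F := auxL p hfrob hp0 with hL
  have hkerset : (L.ker : Set F) = {u : F | u + u ^ p = 0} := by
    ext x; simp [AddMonoidHom.mem_ker, hL, auxL_apply]
  have hrangesub : (L.range : Set F) ⊆ {x : F | x ^ p = x} := by
    rintro x ⟨u, rfl⟩
    simp only [hL, auxL_apply, Set.mem_setOf_eq]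
    rw [hfrob, aux_ppow hq]
    ring
  have hck : Nat.card L.ker = (L.ker : Set F).ncard := Nat.card_coe_set_eq _
  have hcr : Nat.card L.range = (L.range : Set F).ncard := Nat.card_coe_set_eq _
  have hkle : Nat.card L.ker ≤ p := by
    rw [hck, hkerset]; exact aux_add_pow_le hp2 0
  have hrle : Nat.card L.range ≤ p := by
    rw [hcr]
    exact le_trans (Set.ncard_le_ncard hrangesub (Set.toFinite _)) (aux_fix_le hp2)
  have hprod : Nat.card L.range * Nat.card L.ker = p * p := by
    have h1 := AddSubgroup.card_eq_card_quotient_mul_card_addSubgroup (L.ker)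
    have h2 : Nat.card (F ⧸ L.ker) = Nat.card L.range :=
      Nat.card_congr (QuotientAddGroup.quotientKerEquivRange L).toEquiv
    rw [h2] at h1
    rw [← h1, Nat.card_eq_fintype_card, hq, pow_two]
  have hkp : Nat.card L.ker = p := (aux_nat hprod hrle hkle (by omega)).2
  have hrp : Nat.card L.range = p := (aux_nat hprod hrle hkle (by omega)).1
  have hrangeeq : (L.range : Set F) = {x : F | x ^ p = x} := by
    apply Set.eq_of_subset_of_ncard_le hrangesub _ (Set.toFinite _)
    rw [← hcr, hrp]; exact aux_fix_le hp2
  have hdmem : d ∈ (L.range : Set F) := by rw [hrangeeq]; exact hd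
  obtain ⟨u₀, hu₀⟩ := hdmem
  have hu₀' : u₀ + u₀ ^ p = d := hu₀
  have hfib : {u : F | u + u ^ p = d} = (fun x => u₀ + x) '' {u : F | u + u ^ p = 0} := by
    ext z
    simp only [Set.mem_setOf_eq, Set.mem_image]
    constructor
    · intro hz
      refine ⟨z - u₀, ?_, by ring⟩
      rw [hsub]
      linear_combination hz - hu₀'
    · rintro ⟨x, hx, rfl⟩
      rw [hfrob]
      linear_combination hx + hu₀'
  rw [hfib, Set.ncard_image_of_injective _ (add_right_injective u₀), ← hkerset, ← hck, hkp]

lemma aux_nat2 {a b x y : ℕ} (h : a * b = x * y) (ha : a ≤ x) (hb : b ≤ y)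
    (hx : 0 < x) (hy : 0 < y) : a = x ∧ b = y := by
  constructor <;> nlinarith

lemma aux_mul_count {F : Type} [Field F] [Fintype F] {p : ℕ}
    (hq : Fintype.card F = p ^ 2) (hp2 : 2 ≤ p) {d : F} (hd : d ^ p = d) (hd0 : d ≠ 0) :
    {t : F | t ^ (p + 1) = d}.ncard = p + 1 := by
  classical
  set N : Fˣ →* Fˣ := powMonoidHom (p + 1) with hN
  have hcoe_inj : Function.Injective (fun t : Fˣ => (t : F)) := Units.val_injective
  have hkerset : ((fun t : Fˣ => (t : F)) '' (N.ker : Set Fˣ)) = {x : F | x ^ (p + 1) = 1} := by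
    ext x
    simp only [Set.mem_image, Set.mem_setOf_eq]
    constructor
    · rintro ⟨t, ht, rfl⟩
      have : t ^ (p + 1) = 1 := ht
      calc (t : F) ^ (p + 1) = ((t ^ (p + 1) : Fˣ) : F) := by push_cast; ring
        _ = 1 := by rw [this]; simp
    · intro hx
      have hx0 : IsUnit x := IsUnit.of_mul_eq_one (a := x) (x ^ p) (by rw [← pow_succ']; exact hx)
      obtain ⟨t, rfl⟩ := hx0
      refine ⟨t, ?_, rfl⟩
      have : t ^ (p + 1) = 1 := by
        apply Units.ext
        push_cast
        exact hx
      exact this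
  have hrangesub : ((fun t : Fˣ => (t : F)) '' (N.range : Set Fˣ)) ⊆ {x : F | x ^ (p - 1) = 1} := by
    rintro x ⟨t, ⟨s, rfl⟩, rfl⟩
    simp only [Set.mem_setOf_eq]
    have hx : ((N s : Fˣ) : F) = (s : F) ^ (p + 1) := by simp [hN]
    have hfix : ((N s : Fˣ) : F) ^ p = ((N s : Fˣ) : F) := by
      rw [hx, ← pow_mul]
      have : (p + 1) * p = p * p + p := by ring
      rw [this, pow_add, pow_mul, aux_ppow hq, ← pow_succ']
    have hne : ((N s : Fˣ) : F) ≠ 0 := Units.ne_zero _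
    have : ((N s : Fˣ) : F) ^ (p - 1) * ((N s : Fˣ) : F) = 1 * ((N s : Fˣ) : F) := by
      rw [one_mul, ← pow_succ]
      have : p - 1 + 1 = p := by omega
      rw [this]
      exact hfix
    exact mul_right_cancel₀ hne this
  have hck : Nat.card N.ker = ((fun t : Fˣ => (t : F)) '' (N.ker : Set Fˣ)).ncard := by
    rw [Set.ncard_image_of_injective _ hcoe_inj, ← Nat.card_coe_set_eq]
    rfl
  have hcr : Nat.card N.range = ((fun t : Fˣ => (t : F)) '' (N.range : Set Fˣ)).ncard := by
    rw [Set.ncard_image_of_injective _ hcoe_inj, ← Nat.card_coe_set_eq]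
    rfl
  have hkle : Nat.card N.ker ≤ p + 1 := by
    rw [hck, hkerset]; exact aux_pow_le (by omega) 1
  have hrle : Nat.card N.range ≤ p - 1 := by
    rw [hcr]
    exact le_trans (Set.ncard_le_ncard hrangesub (Set.toFinite _)) (aux_pow_le (by omega) 1)
  have hfact : (p + 1) * (p - 1) = p ^ 2 - 1 := by
    zify [show 1 ≤ p by omega, show 1 ≤ p ^ 2 by nlinarith]
    ring
  have hprod : Nat.card N.range * Nat.card N.ker = (p - 1) * (p + 1) := by
    have h1 := Subgroup.card_eq_card_quotient_mul_card_subgroup (N.ker)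
    have h2 : Nat.card (Fˣ ⧸ N.ker) = Nat.card N.range :=
      Nat.card_congr (QuotientGroup.quotientKerEquivRange N).toEquiv
    rw [h2] at h1
    rw [← h1, Nat.card_eq_fintype_card, Fintype.card_units, hq]
    rw [mul_comm] at hfact
    omega
  have hkp : Nat.card N.ker = p + 1 :=
    (aux_nat2 hprod hrle hkle (by omega) (by omega)).2
  have hrp : Nat.card N.range = p - 1 :=
    (aux_nat2 hprod hrle hkle (by omega) (by omega)).1
  have hrangeeq : ((fun t : Fˣ => (t : F)) '' (N.range : Set Fˣ)) = {x : F | x ^ (p - 1) = 1} := by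
    apply Set.eq_of_subset_of_ncard_le hrangesub _ (Set.toFinite _)
    rw [← hcr, hrp]; exact aux_pow_le (by omega) 1
  have hdmem : d ∈ ((fun t : Fˣ => (t : F)) '' (N.range : Set Fˣ)) := by
    rw [hrangeeq]
    show d ^ (p - 1) = 1
    have h1 : d ^ (p - 1) * d = 1 * d := by
      rw [one_mul, ← pow_succ]
      have : p - 1 + 1 = p := by omega
      rw [this]; exact hd
    exact mul_right_cancel₀ hd0 h1
  obtain ⟨t, ⟨s, rfl⟩, hts⟩ := hdmem
  have hsd : (s : F) ^ (p + 1) = d := by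
    rw [← hts]; simp [hN]
  have hs0 : (s : F) ≠ 0 := Units.ne_zero _
  have hfib : {x : F | x ^ (p + 1) = d} = (fun y => (s : F) * y) '' {y : F | y ^ (p + 1) = 1} := by
    ext x
    simp only [Set.mem_setOf_eq, Set.mem_image]
    constructor
    · intro hx
      refine ⟨x / (s : F), ?_, by field_simp⟩
      rw [div_pow, hx, hsd, div_self hd0]
    · rintro ⟨y, hy, rfl⟩
      rw [mul_pow, hy, hsd, mul_one]
  rw [hfib, Set.ncard_image_of_injective _ (mul_right_injective₀ hs0), ← hkerset, ← hck, hkp]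

/-- The `p`-th power map as a ring hom, given additivity. -/
def auxFro {F : Type} [Field F] (p : ℕ)
    (hfrob : ∀ a b : F, (a + b) ^ p = a ^ p + b ^ p) (hp0 : p ≠ 0) : F →+* F where
  toFun x := x ^ p
  map_one' := one_pow p
  map_mul' a b := mul_pow a b p
  map_zero' := zero_pow hp0
  map_add' := hfrob

theorem stmt_18 (p : ℕ) (hp : ∃ r k : ℕ, Nat.Prime r ∧ 0 < k ∧ p = r ^ k)
    (F : Type) [Field F] [Fintype F] (hq : Fintype.card F = p ^ 2)
    (n : ℕ)
    (H : Matrix (Fin (n + 1)) (Fin (n + 1)) F)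
    (hHerm : ∀ i j, H i j = (H j i) ^ p) (hH0 : H ≠ 0)
    (V : Set (Projectivization F (Fin (n + 1) → F)))
    (hV : V = {x | ∑ i, ∑ j, x.rep i * H i j * (x.rep j) ^ p = 0})
    (W : Submodule F (Fin (n + 1) → F)) (hW : Module.finrank F W = 2)
    (ℓ : Set (Projectivization F (Fin (n + 1) → F)))
    (hℓ : ℓ = {x | Projectivization.submodule x ≤ W}) :
    (ℓ ∩ V).ncard = 1 ∨ (ℓ ∩ V).ncard = p + 1 ∨ ℓ ⊆ V := by
  classical
  have hp2 : 2 ≤ p := by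
    obtain ⟨r, k, hr, hk, rfl⟩ := hp
    calc 2 ≤ r := hr.two_le
      _ ≤ r ^ k := Nat.le_self_pow (by omega) r
  have hp0 : p ≠ 0 := by omega
  have hfrob := aux_frob hp hq
  have hpp : ∀ a : F, (a ^ p) ^ p = a := aux_ppow hq
  have hneg : ∀ x : F, (-x) ^ p = -(x ^ p) := by
    intro x
    have h := hfrob x (-x)
    simp only [add_neg_cancel, zero_pow hp0] at h
    linear_combination -h
  have hsub : ∀ a b : F, (a - b) ^ p = a ^ p - b ^ p := by
    intro a b
    rw [sub_eq_add_neg, hfrob, hneg]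
    ring
  set φ : F →+* F := auxFro p hfrob hp0 with hφ
  have hφa : ∀ x : F, φ x = x ^ p := fun _ => rfl
  -- the sesquilinear form and quadratic form
  set B : (Fin (n + 1) → F) → (Fin (n + 1) → F) → F :=
    fun w z => ∑ i, ∑ j, w i * H i j * (z j) ^ p with hB
  set Q : (Fin (n + 1) → F) → F := fun w => B w w with hQ
  have hQdef : ∀ w, Q w = ∑ i, ∑ j, w i * H i j * (w j) ^ p := fun _ => rfl
  have hBconj : ∀ w z, (B w z) ^ p = B z w := by
    intro w z
    have h1 : (B w z) ^ p = ∑ i, ∑ j, (w i) ^ p * H j i * z j := by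
      rw [← hφa, hB]
      simp only [map_sum φ]
      refine Finset.sum_congr rfl fun i _ => Finset.sum_congr rfl fun j _ => ?_
      rw [map_mul φ, map_mul φ, hφa, hφa, hφa, hpp, ← hHerm j i]
    rw [h1, Finset.sum_comm, hB]
    refine Finset.sum_congr rfl fun j _ => Finset.sum_congr rfl fun i _ => ?_
    ring
  have hQfix : ∀ w, (Q w) ^ p = Q w := fun w => hBconj w w
  have hQsmul : ∀ (c : F) w, Q (c • w) = (c * c ^ p) * Q w := by
    intro c w
    rw [hQdef, hQdef, Finset.mul_sum]
    refine Finset.sum_congr rfl fun i _ => ?_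
    rw [Finset.mul_sum]
    refine Finset.sum_congr rfl fun j _ => ?_
    simp only [Pi.smul_apply, smul_eq_mul]
    rw [mul_pow]
    ring
  -- membership in V
  have hmemV : ∀ (w : Fin (n + 1) → F) (hw : w ≠ 0),
      (Projectivization.mk F w hw ∈ V ↔ Q w = 0) := by
    intro w hw
    obtain ⟨c, hc⟩ := Projectivization.exists_smul_eq_mk_rep F w hw
    have hrep : (Projectivization.mk F w hw).rep = (c : F) • w := hc.symm
    rw [hV]
    simp only [Set.mem_setOf_eq]
    rw [← hQdef, hrep, hQsmul]
    have hc0 : (c : F) * (c : F) ^ p ≠ 0 := by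
      apply mul_ne_zero (Units.ne_zero c)
      exact pow_ne_zero _ (Units.ne_zero c)
    constructor
    · intro h
      rcases mul_eq_zero.1 h with h | h
      · exact absurd h hc0
      · exact h
    · intro h
      rw [h, mul_zero]
  -- basis of W
  obtain ⟨bW⟩ : Nonempty (Module.Basis (Fin 2) F W) := ⟨Module.finBasisOfFinrankEq F W hW⟩
  set u : Fin (n + 1) → F := ((bW 0 : W) : Fin (n + 1) → F) with hu
  set v : Fin (n + 1) → F := ((bW 1 : W) : Fin (n + 1) → F) with hv
  have huW : u ∈ W := (bW 0).2
  have hvW : v ∈ W := (bW 1).2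
  have hli : LinearIndependent F (fun i : Fin 2 => ((bW i : W) : Fin (n + 1) → F)) :=
    bW.linearIndependent.map' W.subtype W.ker_subtype
  have huv : ∀ a c : F, a • u + c • v = 0 → a = 0 ∧ c = 0 := by
    intro a c h
    have h2 := Fintype.linearIndependent_iff.1 hli ![a, c] (by
      rw [Fin.sum_univ_two]
      simp only [Matrix.cons_val_zero, Matrix.cons_val_one, Matrix.head_cons]
      exact h)
    exact ⟨h2 0, h2 1⟩
  have hu0 : u ≠ 0 := by
    intro h
    have := (huv 1 0 (by simp only [h, one_smul, zero_smul, add_zero])).1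
    norm_num at this
  have htv0 : ∀ t : F, t • u + v ≠ 0 := by
    intro t h
    have := (huv t 1 (by simpa using h)).2
    norm_num at this
  have hmemW : ∀ w ∈ W, ∃ a c : F, w = a • u + c • v := by
    intro w hw
    refine ⟨bW.repr ⟨w, hw⟩ 0, bW.repr ⟨w, hw⟩ 1, ?_⟩
    have h1 := bW.sum_repr ⟨w, hw⟩
    rw [Fin.sum_univ_two] at h1
    have h2 := congrArg (Subtype.val) h1
    rw [Submodule.coe_add, Submodule.coe_smul, Submodule.coe_smul] at h2
    exact h2.symm
  -- parametrization of the line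
  set P : Projectivization F (Fin (n + 1) → F) := Projectivization.mk F u hu0 with hP
  set e : F → Projectivization F (Fin (n + 1) → F) :=
    fun t => Projectivization.mk F (t • u + v) (htv0 t) with he
  have hmemℓ : ∀ x, x ∈ ℓ ↔ x.rep ∈ W := by
    intro x
    rw [hℓ]
    simp only [Set.mem_setOf_eq]
    rw [Projectivization.submodule_eq]
    exact Submodule.span_singleton_le_iff_mem _ _
  have hℓdecomp : ℓ = insert P (Set.range e) := by
    ext x
    constructor
    · intro hx
      obtain ⟨a, c, hac⟩ := hmemW x.rep ((hmemℓ x).1 hx)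
      have hxmk : Projectivization.mk F x.rep x.rep_nonzero = x := Projectivization.mk_rep x
      by_cases hc : c = 0
      · left
        have ha : a ≠ 0 := by
          intro h0
          apply x.rep_nonzero
          rw [hac, h0, hc, zero_smul, zero_smul, add_zero]
        rw [← hxmk, hP]
        rw [Projectivization.mk_eq_mk_iff']
        exact ⟨a, by rw [hac, hc, zero_smul, add_zero]⟩
      · right
        refine ⟨a / c, ?_⟩
        rw [he, ← hxmk]
        symm
        rw [Projectivization.mk_eq_mk_iff']
        refine ⟨c, ?_⟩
        rw [hac, smul_add, smul_smul]
        congr 2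
        field_simp
    · intro hx
      rcases hx with hx | ⟨t, rfl⟩
      · rw [hx, hmemℓ]
        have := Projectivization.exists_smul_eq_mk_rep F u hu0
        obtain ⟨c, hc⟩ := this
        rw [hP, ← hc]
        exact W.smul_mem _ huW
      · rw [hmemℓ]
        obtain ⟨c, hc⟩ := Projectivization.exists_smul_eq_mk_rep F (t • u + v) (htv0 t)
        rw [he, ← hc]
        exact W.smul_mem _ (W.add_mem (W.smul_mem _ huW) hvW)
  have heinj : Function.Injective e := by
    intro s t hst
    rw [he, Projectivization.mk_eq_mk_iff'] at hst
    obtain ⟨d, hd⟩ := hst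
    have h0 : (d * t - s) • u + (d - 1) • v = 0 := by
      rw [sub_smul, sub_smul, mul_smul]
      rw [smul_add, smul_smul] at hd
      have hz : ((d * t) • u + d • v) - (s • u + v) = 0 := sub_eq_zero_of_eq hd
      rw [← hz]
      module
    obtain ⟨h1, h2⟩ := huv _ _ h0
    have hd1 : d = 1 := by linear_combination h2
    rw [hd1, one_mul] at h1
    linear_combination -h1
  have hPnotine : ∀ t, P ≠ e t := by
    intro t h
    rw [hP, he, Projectivization.mk_eq_mk_iff'] at h
    obtain ⟨d, hd⟩ := h
    have h0 : (d * t - 1) • u + d • v = 0 := by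
      have hz : d • (t • u + v) - u = 0 := sub_eq_zero_of_eq hd
      rw [← hz]
      module
    obtain ⟨h1, h2⟩ := huv _ _ h0
    rw [h2, zero_mul] at h1
    norm_num at h1
  -- expansion of Q on the line
  have hexpand : ∀ t : F,
      Q (t • u + v) = t * t ^ p * B u u + t * B u v + t ^ p * (B u v) ^ p + B v v := by
    intro t
    have step : ∀ i j, (t • u + v) i * H i j * ((t • u + v) j) ^ p
        = t * t ^ p * (u i * H i j * (u j) ^ p) + t * (u i * H i j * (v j) ^ p)
          + t ^ p * (v i * H i j * (u j) ^ p) + v i * H i j * (v j) ^ p := by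
      intro i j
      simp only [Pi.add_apply, Pi.smul_apply, smul_eq_mul]
      rw [hfrob (t * u j) (v j), mul_pow]
      ring
    rw [hBconj u v]
    rw [hQdef]
    simp only [hB]
    calc (∑ i, ∑ j, (t • u + v) i * H i j * ((t • u + v) j) ^ p)
        = ∑ i, ∑ j, (t * t ^ p * (u i * H i j * (u j) ^ p) + t * (u i * H i j * (v j) ^ p)
          + t ^ p * (v i * H i j * (u j) ^ p) + v i * H i j * (v j) ^ p) :=
          Finset.sum_congr rfl fun i _ => Finset.sum_congr rfl fun j _ => step i j
      _ = _ := by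
          simp only [Finset.sum_add_distrib, Finset.mul_sum]
  have hQuB : Q u = B u u := rfl
  have hαfix : (B u u) ^ p = B u u := hBconj u u
  have hδfix : (B v v) ^ p = B v v := hBconj v v
  -- the affine solution set
  set T : Set F := {t : F | Q (t • u + v) = 0} with hT
  -- decomposition of ℓ ∩ V
  have hsplit : ℓ ∩ V = (if Q u = 0 then {P} else ∅) ∪ e '' T := by
    rw [hℓdecomp]
    ext x
    simp only [Set.mem_inter_iff, Set.mem_insert_iff, Set.mem_union, Set.mem_image,
      Set.mem_range]
    constructor
    · rintro ⟨hx1, hx2⟩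
      rcases hx1 with rfl | ⟨t, rfl⟩
      · left
        have hQu0 : Q u = 0 := by
          apply (hmemV u hu0).1
          rw [← hP]
          exact hx2
        rw [if_pos hQu0]
        exact Set.mem_singleton _
      · right
        refine ⟨t, ?_, rfl⟩
        exact (hmemV _ (htv0 t)).1 hx2
    · intro hx
      rcases hx with hx | ⟨t, ht, rfl⟩
      · split_ifs at hx with hQu0
        · rw [Set.mem_singleton_iff] at hx
          subst hx
          exact ⟨Or.inl rfl, (hmemV u hu0).2 hQu0⟩
        · exact absurd hx (Set.notMem_empty _)
      · exact ⟨Or.inr ⟨t, rfl⟩, (hmemV _ (htv0 t)).2 ht⟩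
  haveI : Finite (Projectivization F (Fin (n + 1) → F)) := Quotient.finite _
  have hcount : (ℓ ∩ V).ncard = (if Q u = 0 then 1 else 0) + T.ncard := by
    rw [hsplit]
    have himg : (e '' T).ncard = T.ncard := Set.ncard_image_of_injective _ heinj
    split_ifs with h0
    · rw [Set.ncard_union_eq ?disj (Set.toFinite _) (Set.toFinite _),
        Set.ncard_singleton, himg]
      case disj =>
        rw [Set.disjoint_singleton_left]
        rintro ⟨t, ht, hte⟩
        exact hPnotine t hte.symm
    · rw [Set.empty_union, himg, zero_add]
  -- main case analysis
  by_cases hA : B u u = 0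
  · by_cases hβ : B u v = 0
    · by_cases hδ : B v v = 0
      · -- line contained in the variety
        right; right
        intro x hx
        rw [hℓdecomp] at hx
        rcases hx with rfl | ⟨t, rfl⟩
        · exact (hmemV u hu0).2 (by rw [hQuB]; exact hA)
        · apply (hmemV _ (htv0 t)).2
          rw [hexpand, hA, hβ, hδ]
          simp [zero_pow hp0]
      · -- exactly one point
        left
        rw [hcount]
        have hTempty : T = (∅ : Set F) := by
          ext t
          simp only [hT, Set.mem_setOf_eq, Set.mem_empty_iff_false, iff_false]
          rw [hexpand, hA, hβ]
          simp [zero_pow hp0, hδ]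
        rw [hTempty, if_pos (by rw [hQuB]; exact hA)]
        simp
    · -- p + 1 points through the additive count
      right; left
      rw [hcount]
      have hd : (-(B v v)) ^ p = -(B v v) := by rw [hneg, hδfix]
      have hTeq : T = (fun x : F => (B u v)⁻¹ * x) '' {x : F | x + x ^ p = -(B v v)} := by
        ext t
        simp only [hT, Set.mem_setOf_eq, Set.mem_image]
        rw [hexpand, hA]
        constructor
        · intro h
          refine ⟨B u v * t, ?_, by field_simp⟩
          rw [mul_pow]
          linear_combination h
        · rintro ⟨x, hx, rfl⟩
          have hx' : x + x ^ p = -(B v v) := hx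
          rw [mul_pow, inv_pow]
          field_simp
          linear_combination (B u v * B u v ^ p) * hx'
      rw [hTeq, Set.ncard_image_of_injective _ (mul_right_injective₀ (inv_ne_zero hβ)),
        aux_add_count hq hp2 hfrob hd, if_pos (by rw [hQuB]; exact hA)]
      ring
  · -- B u u ≠ 0
    set γ : F := (B u v) ^ p / B u u with hγ
    set d : F := γ ^ (p + 1) - B v v / B u u with hd
    have hγp : γ ^ p = B u v / B u u := by
      rw [hγ, div_pow, hpp, hαfix]
    have hid : ∀ t : F, B u u * ((t + γ) ^ (p + 1) - d)
        = t * t ^ p * B u u + t * B u v + t ^ p * (B u v) ^ p + B v v := by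
      intro t
      rw [show (t + γ) ^ (p + 1) = (t + γ) ^ p * (t + γ) from pow_succ _ _,
        hfrob t γ, hd, show γ ^ (p + 1) = γ ^ p * γ from pow_succ _ _, hγp, hγ]
      field_simp
      ring
    have hkey : ∀ t : F, (Q (t • u + v) = 0 ↔ (t + γ) ^ (p + 1) = d) := by
      intro t
      rw [hexpand, ← hid]
      constructor
      · intro h
        rcases mul_eq_zero.1 h with h' | h'
        · exact absurd h' hA
        · exact sub_eq_zero.1 h'
      · intro h
        rw [h, sub_self, mul_zero]
    have hifzero : (if Q u = 0 then 1 else 0) = 0 := by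
      rw [if_neg]
      rw [hQuB]
      exact hA
    by_cases hd0 : d = 0
    · left
      rw [hcount, hifzero, zero_add]
      have hTeq : T = {-γ} := by
        ext t
        simp only [hT, Set.mem_setOf_eq, Set.mem_singleton_iff]
        rw [hkey, hd0, pow_eq_zero_iff (Nat.succ_ne_zero p)]
        constructor
        · intro h; linear_combination h
        · intro h; linear_combination h
      rw [hTeq, Set.ncard_singleton]
    · right; left
      rw [hcount, hifzero, zero_add]
      have hdfix : d ^ p = d := by
        rw [hd, hsub]
        congr 1
        · rw [← pow_mul, show (p + 1) * p = p * p + p from by ring, pow_add, pow_mul, hpp,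
            ← pow_succ']
        · rw [div_pow, hαfix, hδfix]
      have hTeq : T = (fun x : F => x - γ) '' {x : F | x ^ (p + 1) = d} := by
        ext t
        simp only [hT, Set.mem_setOf_eq, Set.mem_image]
        rw [hkey]
        constructor
        · intro h
          exact ⟨t + γ, h, by ring⟩
        · rintro ⟨x, hx, rfl⟩
          rw [sub_add_cancel]
          exact hx
      rw [hTeq, Set.ncard_image_of_injective _ (sub_left_injective),
        aux_mul_count hq hp2 hdfix hd0]
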